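/- Let X be standard logistic, F(x) = 1/(1 + e^{−x}). Then for all p ∈ (0, 0.5), p_{L,p}(X) = p_{R,p}(X) = (1 + ((1−p)/p)^{(2−p)/p})^{−1}, and this common value is at most (1 + 3⁵)⁻¹ = 1/244 for all p ∈ (0, 0.25]. -/

import Mathlib

open Set MeasureTheory

lemma iio_toReal_aux (μ : Measure ℝ) [IsProbabilityMeasure μ]
    (hF : ∀ x : ℝ, (μ (Iic x)).toReal = 1 / (1 + Real.exp (-x))) (a : ℝ) :
    (μ (Iio a)).toReal = 1 / (1 + Real.exp (-a)) := by
  have hub : (μ (Iio a)).toReal ≤ 1 / (1 + Real.exp (-a)) := by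
    rw [← hF a]
    exact ENNReal.toReal_mono (measure_ne_top μ _) (measure_mono Iio_subset_Iic_self)
  have hlb : ∀ n : ℕ, 1 / (1 + Real.exp (-(a - 1/(n+1)))) ≤ (μ (Iio a)).toReal := by
    intro n
    rw [← hF (a - 1/(n+1))]
    refine ENNReal.toReal_mono (measure_ne_top μ _) (measure_mono (Iic_subset_Iio.mpr ?_))
    have : (0:ℝ) < 1/(n+1) := by positivity
    linarith
  have htend : Filter.Tendsto (fun n : ℕ => 1 / (1 + Real.exp (-(a - 1/(n+1)))))
      Filter.atTop (nhds (1 / (1 + Real.exp (-a)))) := by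
    have h1 : Filter.Tendsto (fun n : ℕ => a - 1/((n:ℝ)+1)) Filter.atTop (nhds a) := by
      have h0 : Filter.Tendsto (fun n : ℕ => 1 / ((n:ℝ) + 1)) Filter.atTop (nhds 0) :=
        tendsto_one_div_add_atTop_nhds_zero_nat
      simpa using (tendsto_const_nhds (x := a)).sub h0
    have hc : Continuous fun x : ℝ => 1 / (1 + Real.exp (-x)) := by
      apply Continuous.div continuous_const
      · continuity
      · intro x; positivity
    exact (hc.tendsto a).comp h1
  have := le_of_tendsto htend (Filter.Eventually.of_forall hlb)
  linarith

lemma ioi_toReal_aux (μ : Measure ℝ) [IsProbabilityMeasure μ]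
    (hF : ∀ x : ℝ, (μ (Iic x)).toReal = 1 / (1 + Real.exp (-x))) (a : ℝ) :
    (μ (Ioi a)).toReal = 1 - 1 / (1 + Real.exp (-a)) := by
  have hu : μ (Iic a) + μ (Ioi a) = 1 := by
    rw [← measure_union (Iic_disjoint_Ioi le_rfl) measurableSet_Ioi, Iic_union_Ioi,
      measure_univ]
  have h2 := congrArg ENNReal.toReal hu
  rw [ENNReal.toReal_add (measure_ne_top μ _) (measure_ne_top μ _), hF a,
    ENNReal.toReal_one] at h2
  linarith

/-- For a standard logistic random variable (c.d.f. `F(x) = 1/(1+e^{−x})`, quantile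
`F⁻¹(q) = log(q/(1−q))`), for all `p ∈ (0, 1/2)`,
`p_{L,p}(X) = p_{R,p}(X) = (1 + ((1−p)/p)^{(2−p)/p})⁻¹`, and this common value is
at most `(1 + 3^5)⁻¹` for `p ∈ (0, 1/4]`. -/
theorem logistic_outside_probs
    (μ : Measure ℝ) [IsProbabilityMeasure μ]
    (hF : ∀ x : ℝ, (μ (Iic x)).toReal = 1 / (1 + Real.exp (-x)))
    (p : ℝ) (hp : p ∈ Ioo (0:ℝ) (1/2)) :
    let Finv : ℝ → ℝ := fun q => Real.log (q / (1 - q))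
    let v : ℝ := (1 + ((1 - p)/p) ^ ((2 - p)/p))⁻¹
    (μ (Iio ((1/p) * Finv p - ((1 - p)/p) * Finv (1 - p)))).toReal = v ∧
    (μ (Ioi ((1/p) * Finv (1 - p) - ((1 - p)/p) * Finv p))).toReal = v ∧
    (p ≤ 1/4 → v ≤ (1 + 3^5 : ℝ)⁻¹) := by
  intro Finv v
  obtain ⟨hp0, hp1⟩ := hp
  have h1p : 0 < 1 - p := by linarith
  have hq : (0:ℝ) < (1-p)/p := by positivity
  set s := Real.log ((1-p)/p) with hs
  have hFinv1 : Finv p = -s := by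
    show Real.log (p / (1 - p)) = -s
    rw [hs, ← Real.log_inv]
    congr 1
    field_simp
  have hFinv2 : Finv (1 - p) = s := by
    show Real.log ((1 - p) / (1 - (1 - p))) = s
    rw [hs]
    norm_num
  set e := (2 - p)/p with he
  have hL : (1/p) * Finv p - ((1-p)/p) * Finv (1-p) = -(e * s) := by
    rw [hFinv1, hFinv2, he]; field_simp; ring
  have hR : (1/p) * Finv (1-p) - ((1-p)/p) * Finv p = e * s := by
    rw [hFinv1, hFinv2, he]; field_simp; ring
  set t := ((1-p)/p) ^ e with ht
  have htexp : t = Real.exp (e * s) := by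
    rw [ht, Real.rpow_def_of_pos hq, mul_comm]
  have ht0 : 0 < t := by rw [htexp]; exact Real.exp_pos _
  have hvt : v = 1/(1+t) := by rw [one_div]
  refine ⟨?_, ?_, ?_⟩
  · rw [hL, iio_toReal_aux μ hF, hvt, neg_neg, ← htexp]
  · rw [hR, ioi_toReal_aux μ hF, hvt]
    rw [Real.exp_neg, ← htexp]
    rw [inv_eq_one_div]
    field_simp
    ring
  · intro hp4
    have h3 : (3:ℝ) ≤ (1-p)/p := by rw [le_div_iff₀ hp0]; linarith
    have h5 : (5:ℝ) ≤ e := by rw [he, le_div_iff₀ hp0]; linarith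
    have h35 : (3:ℝ)^(5:ℝ) = 243 := by
      rw [show (5:ℝ) = ((5:ℕ):ℝ) by norm_num, Real.rpow_natCast]; norm_num
    have ht5 : (243:ℝ) ≤ t := by
      calc (243:ℝ) = (3:ℝ)^(5:ℝ) := h35.symm
        _ ≤ (3:ℝ)^e := by
            exact (Real.rpow_le_rpow_left_iff (by norm_num)).mpr h5
        _ ≤ ((1-p)/p)^e := Real.rpow_le_rpow (by norm_num) h3 (by linarith)
        _ = t := by rw [ht]
    have : ((1:ℝ) + 3^5)⁻¹ = (244:ℝ)⁻¹ := by norm_num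
    rw [this, hvt, one_div]
    apply inv_anti₀ <;> linarith
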